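/- For every τ > 0, the double integral ∫₀^∞∫₀^∞ y y′ exp(−(y² + y′²)/4 − (y y′/2) cosh τ) dy dy′ converges and equals 4τ cosh τ / sinh³ τ − 4 / sinh² τ. -/

import Mathlib

open MeasureTheory Real Filter Set

/-- Cubic Gaussian moment: `∫₀^∞ y³ e^{-L y²} dy = 1/(2L²)`. -/
lemma zaremba_gauss_cube {L : ℝ} (hL : 0 < L) :
    IntegrableOn (fun y : ℝ => y ^ 3 * Real.exp (-(L * y ^ 2))) (Set.Ioi 0) ∧
    ∫ y in Set.Ioi (0:ℝ), y ^ 3 * Real.exp (-(L * y ^ 2)) = 1 / (2 * L ^ 2) := by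
  set G : ℝ → ℝ := fun y => -(y ^ 2 / (2 * L) + 1 / (2 * L ^ 2)) * Real.exp (-(L * y ^ 2))
    with hGdef
  have hderiv : ∀ y : ℝ, HasDerivAt G (y ^ 3 * Real.exp (-(L * y ^ 2))) y := by
    intro y
    have h1 : HasDerivAt (fun y : ℝ => -(y ^ 2 / (2 * L) + 1 / (2 * L ^ 2)))
        (-((2 : ℕ) * y ^ 1 / (2 * L))) y :=
      (((hasDerivAt_pow 2 y).div_const (2 * L)).add_const (1 / (2 * L ^ 2))).neg
    have h2 : HasDerivAt (fun y : ℝ => -(L * y ^ 2)) (-(L * ((2 : ℕ) * y ^ 1))) y :=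
      (((hasDerivAt_pow 2 y).const_mul L)).neg
    have h3 := h2.exp
    refine (h1.mul h3).congr_deriv ?_
    have he : Real.exp (-(L * y ^ 2)) ≠ 0 := Real.exp_ne_zero _
    push_cast
    field_simp
    ring
  have hexp2 : Tendsto (fun y : ℝ => L * y ^ 2) atTop atTop :=
    (tendsto_pow_atTop two_ne_zero).const_mul_atTop hL
  have h1 : Tendsto (fun y : ℝ => (L * y ^ 2) * Real.exp (-(L * y ^ 2))) atTop (nhds 0) := by
    have := (Real.tendsto_pow_mul_exp_neg_atTop_nhds_zero 1).comp hexp2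
    simpa [Function.comp_def] using this
  have h2 : Tendsto (fun y : ℝ => Real.exp (-(L * y ^ 2))) atTop (nhds 0) :=
    Real.tendsto_exp_neg_atTop_nhds_zero.comp hexp2
  have htend : Tendsto G atTop (nhds 0) := by
    have h3 := ((h1.const_mul (1 / (2 * L ^ 2))).add (h2.const_mul (1 / (2 * L ^ 2)))).neg
    have h4 : -((1 / (2 * L ^ 2)) * 0 + (1 / (2 * L ^ 2)) * 0) = (0 : ℝ) := by ring
    rw [h4] at h3
    refine h3.congr fun y => ?_
    simp only [hGdef]
    field_simp
  have hnonneg : ∀ y ∈ Set.Ioi (0:ℝ), 0 ≤ y ^ 3 * Real.exp (-(L * y ^ 2)) := by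
    intro y hy
    have : (0:ℝ) < y := hy
    positivity
  have hcont : ContinuousWithinAt G (Set.Ici 0) 0 :=
    (hderiv 0).continuousAt.continuousWithinAt
  refine ⟨integrableOn_Ioi_deriv_of_nonneg hcont (fun y _ => hderiv y) hnonneg htend, ?_⟩
  rw [integral_Ioi_of_hasDerivAt_of_nonneg hcont (fun y _ => hderiv y) hnonneg htend]
  simp [hGdef]

/-- `∫₀^∞ y e^{-y²/4} dy` converges. -/
lemma zaremba_gauss_lin :
    IntegrableOn (fun y : ℝ => y * Real.exp (-(y ^ 2) / 4)) (Set.Ioi 0) := by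
  set G : ℝ → ℝ := fun y => -2 * Real.exp (-(y ^ 2) / 4) with hGdef
  have hderiv : ∀ y : ℝ, HasDerivAt G (y * Real.exp (-(y ^ 2) / 4)) y := by
    intro y
    have h2 : HasDerivAt (fun y : ℝ => -(y ^ 2) / 4) (-((2 : ℕ) * y ^ 1) / 4) y :=
      ((hasDerivAt_pow 2 y).neg).div_const 4
    have h3 := (h2.exp).const_mul (-2 : ℝ)
    refine h3.congr_deriv ?_
    push_cast
    ring
  have hexp2 : Tendsto (fun y : ℝ => (4:ℝ)⁻¹ * y ^ 2) atTop atTop :=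
    (tendsto_pow_atTop two_ne_zero).const_mul_atTop (by norm_num)
  have h2 : Tendsto (fun y : ℝ => Real.exp (-(y ^ 2) / 4)) atTop (nhds 0) := by
    have := Real.tendsto_exp_neg_atTop_nhds_zero.comp hexp2
    refine this.congr fun y => ?_
    simp only [Function.comp]
    ring_nf
  have htend : Tendsto G atTop (nhds 0) := by
    have h3 := h2.const_mul (-2 : ℝ)
    rw [show (-2:ℝ) * 0 = 0 by norm_num] at h3
    exact h3
  have hnonneg : ∀ y ∈ Set.Ioi (0:ℝ), 0 ≤ y * Real.exp (-(y ^ 2) / 4) := by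
    intro y hy
    have : (0:ℝ) < y := hy
    positivity
  exact integrableOn_Ioi_deriv_of_nonneg (hderiv 0).continuousAt.continuousWithinAt
    (fun y _ => hderiv y) hnonneg htend

/-- The rational integral `∫₀^∞ t/(t²+2cosh(τ)t+1)² dt`. -/
lemma zaremba_rat_int (τ : ℝ) (hτ : 0 < τ) :
    IntegrableOn (fun t : ℝ => t / (t ^ 2 + 2 * Real.cosh τ * t + 1) ^ 2) (Set.Ioi 0) ∧
    ∫ t in Set.Ioi (0:ℝ), t / (t ^ 2 + 2 * Real.cosh τ * t + 1) ^ 2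
      = τ * Real.cosh τ / (2 * Real.sinh τ ^ 3) - 1 / (2 * Real.sinh τ ^ 2) := by
  set a : ℝ := Real.exp (-τ) with ha
  set b : ℝ := Real.exp τ with hb
  have hapos : 0 < a := Real.exp_pos _
  have hbpos : 0 < b := Real.exp_pos _
  have hab : a < b := Real.exp_lt_exp.2 (by linarith)
  have hba : (0:ℝ) < b - a := by linarith
  have hmul : a * b = 1 := by
    rw [ha, hb, ← Real.exp_add]; simp
  have hsum : a + b = 2 * Real.cosh τ := by
    rw [Real.cosh_eq]; ring
  have hdiff : b - a = 2 * Real.sinh τ := by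
    rw [Real.sinh_eq]; ring
  have hquad : ∀ t : ℝ, t ^ 2 + 2 * Real.cosh τ * t + 1 = (t + a) * (t + b) := by
    intro t
    have : 2 * Real.cosh τ = a + b := hsum.symm
    rw [this, ← hmul]; ring
  set A : ℝ := (a + b) / (b - a) ^ 3 with hA
  set G : ℝ → ℝ := fun t =>
    A * (Real.log (t + a) - Real.log (t + b)) + a / ((b - a) ^ 2 * (t + a))
      + b / ((b - a) ^ 2 * (t + b)) with hGdef
  have hderiv : ∀ t : ℝ, 0 ≤ t → HasDerivAt G
      (A * (1 / (t + a) - 1 / (t + b)) - a / ((b - a) ^ 2 * (t + a) ^ 2)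
        - b / ((b - a) ^ 2 * (t + b) ^ 2)) t := by
    intro t ht
    have hta : (0:ℝ) < t + a := by linarith
    have htb : (0:ℝ) < t + b := by linarith
    have hid : HasDerivAt (fun t : ℝ => t + a) 1 t := (hasDerivAt_id t).add_const a
    have hid' : HasDerivAt (fun t : ℝ => t + b) 1 t := (hasDerivAt_id t).add_const b
    have hlog1 : HasDerivAt (fun t : ℝ => Real.log (t + a)) (1 / (t + a)) t :=
      hid.log hta.ne'
    have hlog2 : HasDerivAt (fun t : ℝ => Real.log (t + b)) (1 / (t + b)) t :=
      hid'.log htb.ne'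
    have hinv1 : HasDerivAt (fun t : ℝ => a / ((b - a) ^ 2 * (t + a)))
        (-(a / ((b - a) ^ 2 * (t + a) ^ 2))) t := by
      have h := (hid.const_mul ((b - a) ^ 2)).inv (by positivity)
      have h2 := h.const_mul a
      refine h2.congr_deriv ?_
      field_simp
    have hinv2 : HasDerivAt (fun t : ℝ => b / ((b - a) ^ 2 * (t + b)))
        (-(b / ((b - a) ^ 2 * (t + b) ^ 2))) t := by
      have h := (hid'.const_mul ((b - a) ^ 2)).inv (by positivity)
      have h2 := h.const_mul b
      refine h2.congr_deriv ?_
      field_simp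
    have := (((hlog1.sub hlog2).const_mul A).add hinv1).add hinv2
    refine this.congr_deriv ?_
    try ring
  have hderiv' : ∀ t ∈ Set.Ioi (0:ℝ), HasDerivAt G
      (t / (t ^ 2 + 2 * Real.cosh τ * t + 1) ^ 2) t := by
    intro t ht
    have ht' : (0:ℝ) < t := ht
    have hta : (0:ℝ) < t + a := by linarith
    have htb : (0:ℝ) < t + b := by linarith
    have h := hderiv t ht'.le
    convert h using 1
    rw [hquad t, hA]
    field_simp
    try ring
  have hnonneg : ∀ t ∈ Set.Ioi (0:ℝ), 0 ≤ t / (t ^ 2 + 2 * Real.cosh τ * t + 1) ^ 2 := by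
    intro t ht
    have ht' : (0:ℝ) < t := ht
    positivity
  have htend : Tendsto G atTop (nhds 0) := by
    have hrat : Tendsto (fun t : ℝ => (t + a) / (t + b)) atTop (nhds 1) := by
      have h0 : Tendsto (fun t : ℝ => (a - b) / (t + b)) atTop (nhds 0) :=
        tendsto_const_nhds.div_atTop (tendsto_atTop_add_const_right _ b tendsto_id)
      have h1 := (tendsto_const_nhds : Tendsto (fun _ : ℝ => (1:ℝ)) atTop (nhds 1)).add h0
      rw [add_zero] at h1
      refine h1.congr' ?_
      filter_upwards [Filter.eventually_gt_atTop (0:ℝ)] with t ht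
      have htb : (0:ℝ) < t + b := by linarith
      field_simp
      try ring
    have hlograt : Tendsto (fun t : ℝ => Real.log (t + a) - Real.log (t + b)) atTop (nhds 0) := by
      have hcont := (Real.continuousAt_log (by norm_num : (1:ℝ) ≠ 0)).tendsto
      have h := hcont.comp hrat
      rw [Real.log_one] at h
      refine h.congr' ?_
      filter_upwards [Filter.eventually_gt_atTop (0:ℝ)] with t ht
      have hta : (0:ℝ) < t + a := by linarith
      have htb : (0:ℝ) < t + b := by linarith
      simp only [Function.comp]
      rw [Real.log_div hta.ne' htb.ne']
    have hfrac : ∀ u : ℝ, 0 < u → Tendsto (fun t : ℝ => u / ((b - a) ^ 2 * (t + u)))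
        atTop (nhds 0) := by
      intro u hu
      refine tendsto_const_nhds.div_atTop ?_
      exact (tendsto_atTop_add_const_right _ u tendsto_id).const_mul_atTop (by positivity)
    have h := ((hlograt.const_mul A).add (hfrac a hapos)).add (hfrac b hbpos)
    simpa using h
  have hcont : ContinuousWithinAt G (Set.Ici 0) 0 :=
    (hderiv 0 le_rfl).continuousAt.continuousWithinAt
  refine ⟨integrableOn_Ioi_deriv_of_nonneg hcont hderiv' hnonneg htend, ?_⟩
  rw [integral_Ioi_of_hasDerivAt_of_nonneg hcont hderiv' hnonneg htend]
  have hs : 0 < Real.sinh τ := by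
    have h := hba
    rw [hdiff] at h
    linarith
  have hG0 : G 0 = A * (-(2 * τ)) + 2 / (b - a) ^ 2 := by
    simp only [hGdef, zero_add]
    rw [ha, hb, Real.log_exp, Real.log_exp]
    field_simp
    ring
  rw [hG0, hA, hsum, hdiff]
  field_simp
  ring

theorem zaremba_double_integral_yy (τ : ℝ) (hτ : 0 < τ) :
    IntegrableOn
      (fun p : ℝ × ℝ =>
        p.1 * p.2 * Real.exp (-(p.1 ^ 2 + p.2 ^ 2) / 4 - p.1 * p.2 / 2 * Real.cosh τ))
      (Set.Ioi 0 ×ˢ Set.Ioi 0) ∧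
    ∫ p in Set.Ioi (0 : ℝ) ×ˢ Set.Ioi (0 : ℝ),
        p.1 * p.2 * Real.exp (-(p.1 ^ 2 + p.2 ^ 2) / 4 - p.1 * p.2 / 2 * Real.cosh τ)
      = 4 * τ * Real.cosh τ / (Real.sinh τ) ^ 3 - 4 / (Real.sinh τ) ^ 2 := by
  have hc : 0 < Real.cosh τ := Real.cosh_pos τ
  have hs : 0 < Real.sinh τ := by
    rw [Real.sinh_eq]
    have := Real.exp_lt_exp.2 (show -τ < τ by linarith)
    linarith
  set f : ℝ × ℝ → ℝ := fun p =>
    p.1 * p.2 * Real.exp (-(p.1 ^ 2 + p.2 ^ 2) / 4 - p.1 * p.2 / 2 * Real.cosh τ) with hfdef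
  have hfcont : Continuous f := by fun_prop
  have hS : MeasurableSet (Set.Ioi (0:ℝ) ×ˢ Set.Ioi (0:ℝ)) :=
    measurableSet_Ioi.prod measurableSet_Ioi
  -- Integrability via domination by a product of Gaussians
  have hbound : Integrable
      (fun p : ℝ × ℝ => (p.1 * Real.exp (-(p.1 ^ 2) / 4)) * (p.2 * Real.exp (-(p.2 ^ 2) / 4)))
      ((volume.restrict (Set.Ioi (0:ℝ))).prod (volume.restrict (Set.Ioi (0:ℝ)))) :=
    zaremba_gauss_lin.mul_prod zaremba_gauss_lin
  rw [Measure.prod_restrict] at hbound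
  have hint : IntegrableOn f (Set.Ioi 0 ×ˢ Set.Ioi 0) := by
    rw [IntegrableOn, Measure.volume_eq_prod]
    refine Integrable.mono' hbound (hfcont.aestronglyMeasurable) ?_
    rw [ae_restrict_iff' hS]
    refine Filter.Eventually.of_forall ?_
    rintro ⟨y, y'⟩ ⟨hy, hy'⟩
    have hy0 : (0:ℝ) < y := hy
    have hy'0 : (0:ℝ) < y' := hy'
    simp only [hfdef, Real.norm_eq_abs]
    rw [abs_of_nonneg (by positivity)]
    have harg : -(y ^ 2 + y' ^ 2) / 4 - y * y' / 2 * Real.cosh τ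
        ≤ -(y ^ 2) / 4 + -(y' ^ 2) / 4 := by nlinarith [mul_pos (mul_pos hy0 hy'0) hc]
    calc y * y' * Real.exp (-(y ^ 2 + y' ^ 2) / 4 - y * y' / 2 * Real.cosh τ)
        ≤ y * y' * Real.exp (-(y ^ 2) / 4 + -(y' ^ 2) / 4) :=
          mul_le_mul_of_nonneg_left (Real.exp_le_exp.2 harg) (by positivity)
      _ = (y * Real.exp (-(y ^ 2) / 4)) * (y' * Real.exp (-(y' ^ 2) / 4)) := by
          rw [Real.exp_add]; ring
  refine ⟨hint, ?_⟩
  -- The transformed integrand after substituting y' = y t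
  set g : ℝ × ℝ → ℝ := fun q =>
    q.1 ^ 3 * q.2 * Real.exp (-((1 + 2 * Real.cosh τ * q.2 + q.2 ^ 2) / 4 * q.1 ^ 2)) with hgdef
  have hgcont : Continuous g := by fun_prop
  have hL : ∀ t : ℝ, 0 < t → 0 < (1 + 2 * Real.cosh τ * t + t ^ 2) / 4 := by
    intro t ht; positivity
  -- Inner substitution
  have hinner : ∀ y ∈ Set.Ioi (0:ℝ),
      (∫ y' in Set.Ioi (0:ℝ), f (y, y')) = ∫ t in Set.Ioi (0:ℝ), g (y, t) := by
    intro y hy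
    have hy0 : (0:ℝ) < y := hy
    have h := integral_comp_mul_left_Ioi (fun u => f (y, u)) 0 hy0
    rw [mul_zero] at h
    have h2 : (∫ u in Set.Ioi (0:ℝ), f (y, u))
        = y * ∫ t in Set.Ioi (0:ℝ), f (y, y * t) := by
      rw [h, smul_eq_mul, ← mul_assoc, mul_inv_cancel₀ hy0.ne', one_mul]
    rw [h2, ← integral_const_mul]
    refine setIntegral_congr_fun measurableSet_Ioi fun t ht => ?_
    have ht0 : (0:ℝ) < t := ht
    simp only [hfdef, hgdef]
    rw [show -(y ^ 2 + (y * t) ^ 2) / 4 - y * (y * t) / 2 * Real.cosh τ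
        = -((1 + 2 * Real.cosh τ * t + t ^ 2) / 4 * y ^ 2) by ring]
    ring
  -- slice integrability and value for fixed t
  have hslice_int : ∀ t ∈ Set.Ioi (0:ℝ),
      Integrable (fun y => g (y, t)) (volume.restrict (Set.Ioi (0:ℝ))) := by
    intro t ht
    have ht0 : (0:ℝ) < t := ht
    have h := ((zaremba_gauss_cube (hL t ht0)).1).const_mul t
    refine h.congr (Filter.Eventually.of_forall fun y => ?_)
    simp only [hgdef]
    ring
  have hslice_val : ∀ t ∈ Set.Ioi (0:ℝ),
      (∫ y in Set.Ioi (0:ℝ), g (y, t))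
        = 8 * (t / (t ^ 2 + 2 * Real.cosh τ * t + 1) ^ 2) := by
    intro t ht
    have ht0 : (0:ℝ) < t := ht
    have hLt := hL t ht0
    have h : (∫ y in Set.Ioi (0:ℝ), g (y, t))
        = t * ∫ y in Set.Ioi (0:ℝ),
            y ^ 3 * Real.exp (-((1 + 2 * Real.cosh τ * t + t ^ 2) / 4 * y ^ 2)) := by
      rw [← integral_const_mul]
      refine setIntegral_congr_fun measurableSet_Ioi fun y hy => ?_
      simp only [hgdef]
      ring
    rw [h, (zaremba_gauss_cube hLt).2]
    have hq : (0:ℝ) < t ^ 2 + 2 * Real.cosh τ * t + 1 := by positivity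
    have hq4 : (1 + 2 * Real.cosh τ * t + t ^ 2) ≠ 0 := by nlinarith
    field_simp
    ring
  -- integrability of g on the product
  have hgint : Integrable (Function.uncurry fun y t => g (y, t))
      ((volume.restrict (Set.Ioi (0:ℝ))).prod (volume.restrict (Set.Ioi (0:ℝ)))) := by
    have hmeas : AEStronglyMeasurable (Function.uncurry fun y t => g (y, t))
        ((volume.restrict (Set.Ioi (0:ℝ))).prod (volume.restrict (Set.Ioi (0:ℝ)))) := by
      have : Continuous (Function.uncurry fun y t => g (y, t)) := by fun_prop
      exact this.aestronglyMeasurable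
    rw [integrable_prod_iff' hmeas]
    constructor
    · filter_upwards [ae_restrict_mem measurableSet_Ioi] with t ht
      exact hslice_int t ht
    · have h8 := ((zaremba_rat_int τ hτ).1).const_mul 8
      refine h8.congr ?_
      filter_upwards [ae_restrict_mem measurableSet_Ioi] with t ht
      have ht0 : (0:ℝ) < t := ht
      have hnorm : (∫ y in Set.Ioi (0:ℝ), ‖g (y, t)‖)
          = ∫ y in Set.Ioi (0:ℝ), g (y, t) := by
        refine setIntegral_congr_fun measurableSet_Ioi fun y hy => ?_
        have hy0 : (0:ℝ) < y := hy
        simp only [hgdef, Real.norm_eq_abs]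
        rw [abs_of_nonneg (by positivity)]
      show 8 * (t / (t ^ 2 + 2 * Real.cosh τ * t + 1) ^ 2)
          = ∫ y in Set.Ioi (0:ℝ), ‖(Function.uncurry fun y t => g (y, t)) (y, t)‖
      simp only [Function.uncurry]
      rw [hnorm, hslice_val t ht]
  -- assemble
  have hiter : (∫ p in Set.Ioi (0:ℝ) ×ˢ Set.Ioi (0:ℝ), f p)
      = ∫ y in Set.Ioi (0:ℝ), ∫ y' in Set.Ioi (0:ℝ), f (y, y') := by
    rw [Measure.volume_eq_prod]
    exact setIntegral_prod f (by rwa [← Measure.volume_eq_prod])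
  calc (∫ p in Set.Ioi (0:ℝ) ×ˢ Set.Ioi (0:ℝ), f p)
      = ∫ y in Set.Ioi (0:ℝ), ∫ y' in Set.Ioi (0:ℝ), f (y, y') := hiter
    _ = ∫ y in Set.Ioi (0:ℝ), ∫ t in Set.Ioi (0:ℝ), g (y, t) :=
        setIntegral_congr_fun measurableSet_Ioi hinner
    _ = ∫ t in Set.Ioi (0:ℝ), ∫ y in Set.Ioi (0:ℝ), g (y, t) :=
        integral_integral_swap hgint
    _ = ∫ t in Set.Ioi (0:ℝ), 8 * (t / (t ^ 2 + 2 * Real.cosh τ * t + 1) ^ 2) :=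
        setIntegral_congr_fun measurableSet_Ioi hslice_val
    _ = 8 * ∫ t in Set.Ioi (0:ℝ), t / (t ^ 2 + 2 * Real.cosh τ * t + 1) ^ 2 :=
        integral_const_mul 8 _
    _ = 8 * (τ * Real.cosh τ / (2 * Real.sinh τ ^ 3) - 1 / (2 * Real.sinh τ ^ 2)) := by
        rw [(zaremba_rat_int τ hτ).2]
    _ = 4 * τ * Real.cosh τ / (Real.sinh τ) ^ 3 - 4 / (Real.sinh τ) ^ 2 := by
        field_simp
        ring
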